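/- Let p be a prime, d ≥ 4, and let B_D : Z_p^d × Z_p^d → Z_p^{d−1} be the bilinear map with B_D(u, v)_k = u_k v_{k+1} − u_{k+1} v_k for 1 ≤ k ≤ d − 2 and B_D(u, v)_{d−1} = u_{d−2} v_d − u_d v_{d−2}. Then the Jacobson radical J of the ring Adj(B_D) equals {(Q(x, y, z), −Q(x, y, z)) : x, y, z ∈ Z_p}, where Q(x, y, z) = x·E_{21} + y·E_{d−2,d−1} + z·E_{d−2,d}, and J² = 0. -/

import Mathlib

open Matrix MulOpposite

/-- The type-`D` bilinear map `B_D : ℤₚᵈ × ℤₚᵈ → ℤₚ^{d−1}`: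
`B_D(u,v)_k = u_k v_{k+1} − u_{k+1} v_k` for `1 ≤ k ≤ d−2` and
`B_D(u,v)_{d−1} = u_{d−2} v_d − u_d v_{d−2}` (`0`-based indexing here). -/
def BDform (p d : ℕ) (u v : Fin d → ZMod p) : Fin (d - 1) → ZMod p :=
  fun k =>
    if (k : ℕ) < d - 2 then
      u ⟨(k : ℕ), by have := k.isLt; omega⟩ * v ⟨(k : ℕ) + 1, by have := k.isLt; omega⟩
        - u ⟨(k : ℕ) + 1, by have := k.isLt; omega⟩ * v ⟨(k : ℕ), by have := k.isLt; omega⟩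
    else
      u ⟨d - 3, by have := k.isLt; omega⟩ * v ⟨d - 1, by have := k.isLt; omega⟩
        - u ⟨d - 1, by have := k.isLt; omega⟩ * v ⟨d - 3, by have := k.isLt; omega⟩

theorem BDform_add_left (p d : ℕ) (u u' v : Fin d → ZMod p) :
    BDform p d (u + u') v = BDform p d u v + BDform p d u' v := by
  funext k; by_cases h : (k : ℕ) < d - 2 <;> simp [BDform, h] <;> ring

theorem BDform_add_right (p d : ℕ) (u v v' : Fin d → ZMod p) :
    BDform p d u (v + v') = BDform p d u v + BDform p d u v' := by
  funext k; by_cases h : (k : ℕ) < d - 2 <;> simp [BDform, h] <;> ring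

theorem BDform_neg_left (p d : ℕ) (u v : Fin d → ZMod p) :
    BDform p d (-u) v = -BDform p d u v := by
  funext k; by_cases h : (k : ℕ) < d - 2 <;> simp [BDform, h] <;> ring

theorem BDform_neg_right (p d : ℕ) (u v : Fin d → ZMod p) :
    BDform p d u (-v) = -BDform p d u v := by
  funext k; by_cases h : (k : ℕ) < d - 2 <;> simp [BDform, h] <;> ring

/-- The adjoint ring `Adj(B_D)` of the type-`D` bilinear map `B_D = BDform p d`, realized
as a subring of `M_d(ℤₚ) × M_d(ℤₚ)ᵐᵒᵖ` (so that the multiplication is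
`(f,g)·(f',g') = (f f', g' g)`), with matrices acting on row vectors on the right:
`(f, g) ∈ Adj(B_D)` iff `B_D(u f, v) = B_D(u, v g)` for all row vectors `u, v`. -/
def AdjDRing (p d : ℕ) :
    Subring (Matrix (Fin d) (Fin d) (ZMod p) × (Matrix (Fin d) (Fin d) (ZMod p))ᵐᵒᵖ) where
  carrier := {fg | ∀ u v : Fin d → ZMod p,
    BDform p d (u ᵥ* fg.1) v = BDform p d u (v ᵥ* fg.2.unop)}
  zero_mem' := by
    intro u v
    simp only [Prod.fst_zero, Prod.snd_zero, unop_zero, Matrix.vecMul_zero]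
    funext k; by_cases h : (k : ℕ) < d - 2 <;> simp [BDform, h]
  one_mem' := by intro u v; simp [Matrix.vecMul_one]
  add_mem' := by
    rintro a b ha hb u v
    simp only [Prod.fst_add, Prod.snd_add, unop_add, Matrix.vecMul_add]
    rw [BDform_add_left, BDform_add_right, ha u v, hb u v]
  neg_mem' := by
    rintro a ha u v
    simp only [Prod.fst_neg, Prod.snd_neg, unop_neg, Matrix.vecMul_neg]
    rw [BDform_neg_left, BDform_neg_right, ha u v]
  mul_mem' := by
    rintro a b ha hb u v
    show BDform p d (u ᵥ* (a.1 * b.1)) v = BDform p d u (v ᵥ* (a.2 * b.2).unop)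
    rw [unop_mul, ← Matrix.vecMul_vecMul, ← Matrix.vecMul_vecMul, hb, ha]

/-- class-`X` predicate on indices for the type-`D` diagram. -/
def isXcls (d j : ℕ) : Prop := (j ≠ d - 1 ∧ j % 2 = 0) ∨ (j = d - 1 ∧ d % 2 = 0)

instance (d j : ℕ) : Decidable (isXcls d j) := by unfold isXcls; infer_instance

/-- The general shape of elements of the adjoint ring. -/
def entMat (p d : ℕ) (α β a b c : ZMod p) : Matrix (Fin d) (Fin d) (ZMod p) :=
  Matrix.of fun i j =>
    if (i : ℕ) = (j : ℕ) then (if isXcls d (j : ℕ) then α else β)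
    else if (i : ℕ) = 1 ∧ (j : ℕ) = 0 then a
    else if (i : ℕ) = d - 3 ∧ (j : ℕ) = d - 2 then b
    else if (i : ℕ) = d - 3 ∧ (j : ℕ) = d - 1 then c
    else 0

lemma entMat_apply (p d : ℕ) (α β a b c : ZMod p) (i j : Fin d) :
    entMat p d α β a b c i j =
    if (i : ℕ) = (j : ℕ) then (if isXcls d (j : ℕ) then α else β)
    else if (i : ℕ) = 1 ∧ (j : ℕ) = 0 then a
    else if (i : ℕ) = d - 3 ∧ (j : ℕ) = d - 2 then b
    else if (i : ℕ) = d - 3 ∧ (j : ℕ) = d - 1 then c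
    else 0 := rfl

lemma entQ_support (p d : ℕ) (hd : 4 ≤ d) (a b c : ZMod p) {i k : Fin d}
    (h : entMat p d 0 0 a b c i k ≠ 0) :
    ((i:ℕ) = 1 ∧ (k:ℕ) = 0) ∨ ((i:ℕ) = d-3 ∧ (k:ℕ) = d-2) ∨ ((i:ℕ) = d-3 ∧ (k:ℕ) = d-1) := by
  rw [entMat_apply] at h
  split_ifs at h <;> first | tauto | (exact absurd rfl h)

lemma entQ_row_out (p d : ℕ) (hd : 4 ≤ d) (a b c : ZMod p) {k : Fin d} (j : Fin d)
    (h1 : (k:ℕ) ≠ 1) (h2 : (k:ℕ) ≠ d-3) :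
    entMat p d 0 0 a b c k j = 0 := by
  rw [entMat_apply]
  split_ifs <;> first | (exfalso; omega) | simp

lemma ent_mid_zero (p d : ℕ) (hd : 4 ≤ d) (α β a b c : ZMod p) {k l : Fin d}
    (hk : (k:ℕ) = 0 ∨ (k:ℕ) = d-2 ∨ (k:ℕ) = d-1) (hl : (l:ℕ) = 1 ∨ (l:ℕ) = d-3) :
    entMat p d α β a b c k l = 0 := by
  rw [entMat_apply, if_neg (by omega), if_neg (by omega), if_neg (by omega), if_neg (by omega)]

lemma QEQ (p d : ℕ) (hd : 4 ≤ d) (α β a b c a' b' c' a'' b'' c'' : ZMod p) :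
    (entMat p d 0 0 a b c * entMat p d α β a' b' c') * entMat p d 0 0 a'' b'' c'' = 0 := by
  ext i j
  rw [Matrix.mul_apply, Matrix.zero_apply]
  apply Finset.sum_eq_zero
  intro l _
  by_cases hq : entMat p d 0 0 a'' b'' c'' l j = 0
  · rw [hq, mul_zero]
  · have hl := entQ_support p d hd a'' b'' c'' hq
    have hz : (entMat p d 0 0 a b c * entMat p d α β a' b' c') i l = 0 := by
      rw [Matrix.mul_apply]
      apply Finset.sum_eq_zero
      intro k _
      by_cases hq2 : entMat p d 0 0 a b c i k = 0
      · rw [hq2, zero_mul]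
      · have hk := entQ_support p d hd a b c hq2
        rw [ent_mid_zero p d hd α β a' b' c' (by tauto) (by tauto), mul_zero]
    rw [hz, zero_mul]

lemma QQ_zero (p d : ℕ) (hd : 4 ≤ d) (a b c a' b' c' : ZMod p) :
    entMat p d 0 0 a b c * entMat p d 0 0 a' b' c' = 0 := by
  ext i j
  rw [Matrix.mul_apply, Matrix.zero_apply]
  apply Finset.sum_eq_zero
  intro k _
  by_cases hq : entMat p d 0 0 a b c i k = 0
  · rw [hq, zero_mul]
  · have hk := entQ_support p d hd a b c hq
    rw [entQ_row_out p d hd a' b' c' j (by omega) (by omega), mul_zero]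

lemma ent_diag0 (p d : ℕ) (hd : 4 ≤ d) (α β a b c : ZMod p) {i j : Fin d}
    (hi : (i:ℕ) = 0) (hj : (j:ℕ) = 0) : entMat p d α β a b c i j = α := by
  rw [entMat_apply, if_pos (by omega), if_pos (by simp only [isXcls]; omega)]

lemma ent_diag1 (p d : ℕ) (hd : 4 ≤ d) (α β a b c : ZMod p) {i j : Fin d}
    (hi : (i:ℕ) = 1) (hj : (j:ℕ) = 1) : entMat p d α β a b c i j = β := by
  rw [entMat_apply, if_pos (by omega), if_neg (by simp only [isXcls]; omega)]

lemma ent_row0_out (p d : ℕ) (hd : 4 ≤ d) (α β a b c : ZMod p) {i k : Fin d}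
    (hi : (i:ℕ) = 0) (hk : (k:ℕ) ≠ 0) : entMat p d α β a b c i k = 0 := by
  rw [entMat_apply, if_neg (by omega), if_neg (by omega), if_neg (by omega), if_neg (by omega)]

lemma ent_col1_out (p d : ℕ) (hd : 4 ≤ d) (α β a b c : ZMod p) {k j : Fin d}
    (hj : (j:ℕ) = 1) (hk : (k:ℕ) ≠ 1) : entMat p d α β a b c k j = 0 := by
  rw [entMat_apply, if_neg (by omega), if_neg (by omega), if_neg (by omega), if_neg (by omega)]

lemma ent_zero_neg (p d : ℕ) (a b c : ZMod p) :
    entMat p d 0 0 (-a) (-b) (-c) = -(entMat p d 0 0 a b c) := by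
  ext i j
  simp only [entMat_apply, Matrix.neg_apply]
  split_ifs <;> simp

theorem adj_struct (p d : ℕ) (hd : 4 ≤ d) (f g : Matrix (Fin d) (Fin d) (ZMod p))
    (h : ∀ u v : Fin d → ZMod p, BDform p d (u ᵥ* f) v = BDform p d u (v ᵥ* g)) :
    ∃ α β a b c : ZMod p,
      f = entMat p d α β a b c ∧ g = entMat p d β α (-a) (-b) (-c) := by
  have fval : ∀ (x : Fin d) (y : ℕ) (hy : y < d), (x:ℕ) = y → x = ⟨y, hy⟩ :=
    fun x y hy e => Fin.val_injective e
  have spec1 : ∀ (i j : Fin d) (k : ℕ) (hk : k < d - 2),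
      f i ⟨k, by omega⟩ * (Pi.single j (1:ZMod p) : Fin d → ZMod p) ⟨k+1, by omega⟩
        - f i ⟨k+1, by omega⟩ * (Pi.single j (1:ZMod p) : Fin d → ZMod p) ⟨k, by omega⟩
      = (Pi.single i (1:ZMod p) : Fin d → ZMod p) ⟨k, by omega⟩ * g j ⟨k+1, by omega⟩
        - (Pi.single i (1:ZMod p) : Fin d → ZMod p) ⟨k+1, by omega⟩ * g j ⟨k, by omega⟩ := by
    intro i j k hk
    have H := congrFun (h (Pi.single i 1) (Pi.single j 1)) ⟨k, by omega⟩
    simp only [BDform, Matrix.single_one_vecMul, Fin.val_mk] at H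
    rw [if_pos hk, if_pos hk] at H
    exact H
  have spec2 : ∀ (i j : Fin d),
      f i ⟨d-3, by omega⟩ * (Pi.single j (1:ZMod p) : Fin d → ZMod p) ⟨d-1, by omega⟩
        - f i ⟨d-1, by omega⟩ * (Pi.single j (1:ZMod p) : Fin d → ZMod p) ⟨d-3, by omega⟩
      = (Pi.single i (1:ZMod p) : Fin d → ZMod p) ⟨d-3, by omega⟩ * g j ⟨d-1, by omega⟩
        - (Pi.single i (1:ZMod p) : Fin d → ZMod p) ⟨d-1, by omega⟩ * g j ⟨d-3, by omega⟩ := by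
    intro i j
    have H := congrFun (h (Pi.single i 1) (Pi.single j 1)) ⟨d-2, by omega⟩
    simp only [BDform, Matrix.single_one_vecMul, Fin.val_mk] at H
    rw [if_neg (by omega), if_neg (by omega)] at H
    exact H
  -- vanishing lemmas for f
  have V1 : ∀ (i : Fin d) (k : ℕ) (hk : k < d - 2), (i:ℕ) ≠ k → (i:ℕ) ≠ k+1 →
      f i ⟨k, by omega⟩ = 0 := by
    intro i k hk h1 h2
    have E := spec1 i ⟨k+1, by omega⟩ k hk
    simp only [Pi.single_apply, Fin.ext_iff, Fin.val_mk, if_true, if_false,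
      eq_self_iff_true, mul_one, mul_zero, one_mul, zero_mul, sub_zero, zero_sub, Ne.symm h1, Ne.symm h2,
      show k ≠ k + 1 by omega, show k + 1 ≠ k by omega] at E
    first
    | linear_combination E
    | linear_combination -E
  have V2 : ∀ (i : Fin d) (k : ℕ) (hk : k < d - 2), (i:ℕ) ≠ k → (i:ℕ) ≠ k+1 →
      f i ⟨k+1, by omega⟩ = 0 := by
    intro i k hk h1 h2
    have E := spec1 i ⟨k, by omega⟩ k hk
    simp only [Pi.single_apply, Fin.ext_iff, Fin.val_mk, if_true, if_false,
      eq_self_iff_true, mul_one, mul_zero, one_mul, zero_mul, sub_zero, zero_sub, Ne.symm h1, Ne.symm h2,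
      show k ≠ k + 1 by omega, show k + 1 ≠ k by omega] at E
    first
    | linear_combination E
    | linear_combination -E
  have V3 : ∀ (i : Fin d), (i:ℕ) ≠ d-3 → (i:ℕ) ≠ d-1 → f i ⟨d-3, by omega⟩ = 0 := by
    intro i h1 h2
    have E := spec2 i ⟨d-1, by omega⟩
    simp only [Pi.single_apply, Fin.ext_iff, Fin.val_mk, if_true, if_false,
      eq_self_iff_true, mul_one, mul_zero, one_mul, zero_mul, sub_zero, zero_sub, Ne.symm h1, Ne.symm h2,
      show d-3 ≠ d-1 by omega, show d-1 ≠ d-3 by omega] at E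
    first
    | linear_combination E
    | linear_combination -E
  have V4 : ∀ (i : Fin d), (i:ℕ) ≠ d-3 → (i:ℕ) ≠ d-1 → f i ⟨d-1, by omega⟩ = 0 := by
    intro i h1 h2
    have E := spec2 i ⟨d-3, by omega⟩
    simp only [Pi.single_apply, Fin.ext_iff, Fin.val_mk, if_true, if_false,
      eq_self_iff_true, mul_one, mul_zero, one_mul, zero_mul, sub_zero, zero_sub, Ne.symm h1, Ne.symm h2,
      show d-3 ≠ d-1 by omega, show d-1 ≠ d-3 by omega] at E
    first
    | linear_combination E
    | linear_combination -E
  -- vanishing lemmas for g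
  have W1 : ∀ (j : Fin d) (k : ℕ) (hk : k < d - 2), (j:ℕ) ≠ k → (j:ℕ) ≠ k+1 →
      g j ⟨k+1, by omega⟩ = 0 := by
    intro j k hk h1 h2
    have E := spec1 ⟨k, by omega⟩ j k hk
    simp only [Pi.single_apply, Fin.ext_iff, Fin.val_mk, if_true, if_false,
      eq_self_iff_true, mul_one, mul_zero, one_mul, zero_mul, sub_zero, zero_sub, Ne.symm h1, Ne.symm h2,
      show k ≠ k + 1 by omega, show k + 1 ≠ k by omega] at E
    first
    | linear_combination E
    | linear_combination -E
  have W2 : ∀ (j : Fin d) (k : ℕ) (hk : k < d - 2), (j:ℕ) ≠ k → (j:ℕ) ≠ k+1 →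
      g j ⟨k, by omega⟩ = 0 := by
    intro j k hk h1 h2
    have E := spec1 ⟨k+1, by omega⟩ j k hk
    simp only [Pi.single_apply, Fin.ext_iff, Fin.val_mk, if_true, if_false,
      eq_self_iff_true, mul_one, mul_zero, one_mul, zero_mul, sub_zero, zero_sub, Ne.symm h1, Ne.symm h2,
      show k ≠ k + 1 by omega, show k + 1 ≠ k by omega] at E
    first
    | linear_combination E
    | linear_combination -E
  have W3 : ∀ (j : Fin d), (j:ℕ) ≠ d-3 → (j:ℕ) ≠ d-1 → g j ⟨d-1, by omega⟩ = 0 := by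
    intro j h1 h2
    have E := spec2 ⟨d-3, by omega⟩ j
    simp only [Pi.single_apply, Fin.ext_iff, Fin.val_mk, if_true, if_false,
      eq_self_iff_true, mul_one, mul_zero, one_mul, zero_mul, sub_zero, zero_sub, Ne.symm h1, Ne.symm h2,
      show d-3 ≠ d-1 by omega, show d-1 ≠ d-3 by omega] at E
    first
    | linear_combination E
    | linear_combination -E
  have W4 : ∀ (j : Fin d), (j:ℕ) ≠ d-3 → (j:ℕ) ≠ d-1 → g j ⟨d-3, by omega⟩ = 0 := by
    intro j h1 h2
    have E := spec2 ⟨d-1, by omega⟩ j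
    simp only [Pi.single_apply, Fin.ext_iff, Fin.val_mk, if_true, if_false,
      eq_self_iff_true, mul_one, mul_zero, one_mul, zero_mul, sub_zero, zero_sub, Ne.symm h1, Ne.symm h2,
      show d-3 ≠ d-1 by omega, show d-1 ≠ d-3 by omega] at E
    first
    | linear_combination E
    | linear_combination -E
  -- diagonal relations
  have D1 : ∀ (k : ℕ) (hk : k < d - 2),
      f ⟨k, by omega⟩ ⟨k, by omega⟩ = g ⟨k+1, by omega⟩ ⟨k+1, by omega⟩ := by
    intro k hk
    have E := spec1 ⟨k, by omega⟩ ⟨k+1, by omega⟩ k hk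
    simp only [Pi.single_apply, Fin.ext_iff, Fin.val_mk, if_true, if_false,
      eq_self_iff_true, mul_one, mul_zero, one_mul, zero_mul, sub_zero, zero_sub,
      show k ≠ k + 1 by omega, show k + 1 ≠ k by omega] at E
    first
    | linear_combination E
    | linear_combination -E
  have D2 : ∀ (k : ℕ) (hk : k < d - 2),
      f ⟨k+1, by omega⟩ ⟨k+1, by omega⟩ = g ⟨k, by omega⟩ ⟨k, by omega⟩ := by
    intro k hk
    have E := spec1 ⟨k+1, by omega⟩ ⟨k, by omega⟩ k hk
    simp only [Pi.single_apply, Fin.ext_iff, Fin.val_mk, if_true, if_false,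
      eq_self_iff_true, mul_one, mul_zero, one_mul, zero_mul, sub_zero, zero_sub,
      show k ≠ k + 1 by omega, show k + 1 ≠ k by omega] at E
    first
    | linear_combination E
    | linear_combination -E
  have D3 : f ⟨d-3, by omega⟩ ⟨d-3, by omega⟩ = g ⟨d-1, by omega⟩ ⟨d-1, by omega⟩ := by
    have E := spec2 ⟨d-3, by omega⟩ ⟨d-1, by omega⟩
    simp only [Pi.single_apply, Fin.ext_iff, Fin.val_mk, if_true, if_false,
      eq_self_iff_true, mul_one, mul_zero, one_mul, zero_mul, sub_zero, zero_sub,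
      show d-3 ≠ d-1 by omega, show d-1 ≠ d-3 by omega] at E
    first
    | linear_combination E
    | linear_combination -E
  have D4 : f ⟨d-1, by omega⟩ ⟨d-1, by omega⟩ = g ⟨d-3, by omega⟩ ⟨d-3, by omega⟩ := by
    have E := spec2 ⟨d-1, by omega⟩ ⟨d-3, by omega⟩
    simp only [Pi.single_apply, Fin.ext_iff, Fin.val_mk, if_true, if_false,
      eq_self_iff_true, mul_one, mul_zero, one_mul, zero_mul, sub_zero, zero_sub,
      show d-3 ≠ d-1 by omega, show d-1 ≠ d-3 by omega] at E
    first
    | linear_combination E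
    | linear_combination -E
  -- off-diagonal relations
  have O1 : g ⟨1, by omega⟩ ⟨0, by omega⟩ = -f ⟨1, by omega⟩ ⟨0, by omega⟩ := by
    have E := spec1 ⟨1, by omega⟩ ⟨1, by omega⟩ 0 (by omega)
    simp only [Pi.single_apply, Fin.ext_iff, Fin.val_mk, if_true, if_false,
      eq_self_iff_true, mul_one, mul_zero, one_mul, zero_mul, sub_zero, zero_sub, zero_add,
      show (0:ℕ) ≠ 1 by omega, show (1:ℕ) ≠ 0 by omega] at E
    first
    | linear_combination E
    | linear_combination -E
  have O2 : g ⟨d-3, by omega⟩ ⟨d-3+1, by omega⟩ = -f ⟨d-3, by omega⟩ ⟨d-3+1, by omega⟩ := by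
    have E := spec1 ⟨d-3, by omega⟩ ⟨d-3, by omega⟩ (d-3) (by omega)
    simp only [Pi.single_apply, Fin.ext_iff, Fin.val_mk, if_true, if_false,
      eq_self_iff_true, mul_one, mul_zero, one_mul, zero_mul, sub_zero, zero_sub,
      show d-3 ≠ d-3+1 by omega, show d-3+1 ≠ d-3 by omega] at E
    first
    | linear_combination E
    | linear_combination -E
  have O3 : g ⟨d-3, by omega⟩ ⟨d-1, by omega⟩ = -f ⟨d-3, by omega⟩ ⟨d-1, by omega⟩ := by
    have E := spec2 ⟨d-3, by omega⟩ ⟨d-3, by omega⟩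
    simp only [Pi.single_apply, Fin.ext_iff, Fin.val_mk, if_true, if_false,
      eq_self_iff_true, mul_one, mul_zero, one_mul, zero_mul, sub_zero, zero_sub,
      show d-3 ≠ d-1 by omega, show d-1 ≠ d-3 by omega] at E
    first
    | linear_combination E
    | linear_combination -E
  -- diagonal chain
  have step : ∀ (k : ℕ) (hk4 : k + 4 ≤ d),
      f ⟨k, by omega⟩ ⟨k, by omega⟩ = f ⟨k+2, by omega⟩ ⟨k+2, by omega⟩ := by
    intro k hk4
    have e1 := D1 k (by omega)
    have e2 := D2 (k+1) (by omega)
    exact e1.trans e2.symm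
  have chain : ∀ (n k e : ℕ) (he : e = k + 2*n) (h2 : e + 2 ≤ d),
      f ⟨k, by omega⟩ ⟨k, by omega⟩ = f ⟨e, by omega⟩ ⟨e, by omega⟩ := by
    intro n
    induction n with
    | zero =>
      intro k e he h2
      obtain rfl : e = k := by omega
      rfl
    | succ n ih =>
      intro k e he h2
      have hs := step k (by omega)
      rw [hs]
      exact ih (k+2) e (by omega) (by omega)
  have top : f ⟨d-2, by omega⟩ ⟨d-2, by omega⟩ = f ⟨d-1, by omega⟩ ⟨d-1, by omega⟩ := by
    have e1 := D2 (d-3) (by omega)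
    have e2 := D4
    rw [fval (⟨d-2, by omega⟩ : Fin d) (d-3+1) (by omega) (by simp only [Fin.val_mk]; omega)]
    exact e1.trans e2.symm
  have Fdiag : ∀ (c0 : ℕ) (hc : c0 < d), f ⟨c0, hc⟩ ⟨c0, hc⟩ =
      if isXcls d c0 then f ⟨0, by omega⟩ ⟨0, by omega⟩ else f ⟨1, by omega⟩ ⟨1, by omega⟩ := by
    intro c0 hc
    by_cases hc1 : c0 = d-1
    · subst hc1
      by_cases hdp : d % 2 = 0
      · rw [if_pos (show isXcls d (d-1) from Or.inr ⟨rfl, hdp⟩)]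
        obtain ⟨n, hn⟩ : ∃ n, d - 2 = 0 + 2*n := ⟨(d-2)/2, by omega⟩
        exact ((chain n 0 (d-2) hn (by omega)).trans top).symm
      · have hxa : ¬ isXcls d (d-1) := by simp only [isXcls, ne_eq, true_and, and_true, false_and, and_false, true_or, or_true, false_or, or_false, not_true_eq_false, not_false_eq_true]; omega
        rw [if_neg hxa]
        obtain ⟨n, hn⟩ : ∃ n, d - 2 = 1 + 2*n := ⟨(d-3)/2, by omega⟩
        exact ((chain n 1 (d-2) hn (by omega)).trans top).symm
    · by_cases hpar : c0 % 2 = 0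
      · rw [if_pos (show isXcls d c0 from Or.inl ⟨hc1, hpar⟩)]
        obtain ⟨n, hn⟩ : ∃ n, c0 = 0 + 2*n := ⟨c0/2, by omega⟩
        exact (chain n 0 c0 hn (by omega)).symm
      · have hxa : ¬ isXcls d c0 := by simp only [isXcls, ne_eq, true_and, and_true, false_and, and_false, true_or, or_true, false_or, or_false, not_true_eq_false, not_false_eq_true]; omega
        rw [if_neg hxa]
        obtain ⟨n, hn⟩ : ∃ n, c0 = 1 + 2*n := ⟨(c0-1)/2, by omega⟩
        exact (chain n 1 c0 hn (by omega)).symm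
  have Gdiag : ∀ (c0 : ℕ) (hc : c0 < d), g ⟨c0, hc⟩ ⟨c0, hc⟩ =
      if isXcls d c0 then f ⟨1, by omega⟩ ⟨1, by omega⟩ else f ⟨0, by omega⟩ ⟨0, by omega⟩ := by
    intro c0 hc
    rcases Nat.lt_or_ge c0 1 with h0 | h1
    · obtain rfl : c0 = 0 := by omega
      have e := D2 0 (by omega)
      rw [if_pos (show isXcls d 0 from Or.inl ⟨by omega, by omega⟩)]
      exact e.symm
    · by_cases hc1 : c0 = d-1
      · subst hc1
        rw [← D3, Fdiag (d-3) (by omega)]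
        by_cases hdp : d % 2 = 0
        · have hxa : ¬ isXcls d (d-3) := by simp only [isXcls, ne_eq, true_and, and_true, false_and, and_false, true_or, or_true, false_or, or_false, not_true_eq_false, not_false_eq_true]; omega
          have hxb : isXcls d (d-1) := by simp only [isXcls, ne_eq, true_and, and_true, false_and, and_false, true_or, or_true, false_or, or_false, not_true_eq_false, not_false_eq_true]; omega
          rw [if_neg hxa, if_pos hxb]
        · have hxa : isXcls d (d-3) := by simp only [isXcls, ne_eq, true_and, and_true, false_and, and_false, true_or, or_true, false_or, or_false, not_true_eq_false, not_false_eq_true]; omega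
          have hxb : ¬ isXcls d (d-1) := by simp only [isXcls, ne_eq, true_and, and_true, false_and, and_false, true_or, or_true, false_or, or_false, not_true_eq_false, not_false_eq_true]; omega
          rw [if_pos hxa, if_neg hxb]
      · have e := D1 (c0-1) (by omega)
        rw [fval (⟨c0, hc⟩ : Fin d) (c0-1+1) (by omega) (by simp only [Fin.val_mk]; omega), ← e,
          Fdiag (c0-1) (by omega)]
        by_cases hpar : c0 % 2 = 0
        · have hxa : ¬ isXcls d (c0-1) := by simp only [isXcls, ne_eq, true_and, and_true, false_and, and_false, true_or, or_true, false_or, or_false, not_true_eq_false, not_false_eq_true]; omega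
          have hxb : isXcls d c0 := by simp only [isXcls, ne_eq, true_and, and_true, false_and, and_false, true_or, or_true, false_or, or_false, not_true_eq_false, not_false_eq_true]; omega
          rw [if_neg hxa, if_pos hxb]
        · have hxa : isXcls d (c0-1) := by simp only [isXcls, ne_eq, true_and, and_true, false_and, and_false, true_or, or_true, false_or, or_false, not_true_eq_false, not_false_eq_true]; omega
          have hxb : ¬ isXcls d c0 := by simp only [isXcls, ne_eq, true_and, and_true, false_and, and_false, true_or, or_true, false_or, or_false, not_true_eq_false, not_false_eq_true]; omega
          rw [if_pos hxa, if_neg hxb]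
  have Fvan : ∀ (i j : Fin d), (i:ℕ) ≠ (j:ℕ) → ¬((i:ℕ) = 1 ∧ (j:ℕ) = 0) →
      ¬((i:ℕ) = d-3 ∧ (j:ℕ) = d-2) → ¬((i:ℕ) = d-3 ∧ (j:ℕ) = d-1) → f i j = 0 := by
    intro i j hij h1 h2 h3
    rcases Nat.lt_or_ge (j:ℕ) (d-2) with hj | hj
    · by_cases hi : (i:ℕ) = (j:ℕ)+1
      · have hj1 : 1 ≤ (j:ℕ) := by omega
        have hv := V2 i ((j:ℕ)-1) (by omega) (by omega) (by omega)
        rw [fval j ((j:ℕ)-1+1) (by omega) (by omega)]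
        exact hv
      · exact V1 i (j:ℕ) (by omega) hij hi
    · rcases Nat.lt_or_ge (j:ℕ) (d-1) with hj2 | hj2
      · have hv := V2 i (d-3) (by omega) (by omega) (by omega)
        rw [fval j (d-3+1) (by omega) (by omega)]
        exact hv
      · have hv := V4 i (by omega) (by omega)
        rw [fval j (d-1) (by omega) (by omega)]
        exact hv
  have Gvan : ∀ (i j : Fin d), (i:ℕ) ≠ (j:ℕ) → ¬((i:ℕ) = 1 ∧ (j:ℕ) = 0) →
      ¬((i:ℕ) = d-3 ∧ (j:ℕ) = d-2) → ¬((i:ℕ) = d-3 ∧ (j:ℕ) = d-1) → g i j = 0 := by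
    intro i j hij h1 h2 h3
    rcases Nat.lt_or_ge (j:ℕ) (d-2) with hj | hj
    · by_cases hi : (i:ℕ) = (j:ℕ)+1
      · have hj1 : 1 ≤ (j:ℕ) := by omega
        have hv := W1 i ((j:ℕ)-1) (by omega) (by omega) (by omega)
        rw [fval j ((j:ℕ)-1+1) (by omega) (by omega)]
        exact hv
      · exact W2 i (j:ℕ) (by omega) hij hi
    · rcases Nat.lt_or_ge (j:ℕ) (d-1) with hj2 | hj2
      · have hv := W1 i (d-3) (by omega) (by omega) (by omega)
        rw [fval j (d-3+1) (by omega) (by omega)]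
        exact hv
      · have hv := W3 i (by omega) (by omega)
        rw [fval j (d-1) (by omega) (by omega)]
        exact hv
  have hb0 : 0 < d := by omega
  have hb1 : 1 < d := by omega
  have hb2 : d-3 < d := by omega
  have hb3 : d-3+1 < d := by omega
  have hb4 : d-1 < d := by omega
  refine ⟨f ⟨0, by omega⟩ ⟨0, by omega⟩, f ⟨1, by omega⟩ ⟨1, by omega⟩,
      f ⟨1, by omega⟩ ⟨0, by omega⟩, f ⟨d-3, by omega⟩ ⟨d-3+1, by omega⟩,
      f ⟨d-3, by omega⟩ ⟨d-1, by omega⟩, ?_, ?_⟩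
  · ext i j
    rw [entMat_apply]
    by_cases hij : (i:ℕ) = (j:ℕ)
    · obtain rfl : i = ⟨(j:ℕ), j.isLt⟩ := fval i (j:ℕ) j.isLt hij
      rw [if_pos hij]
      exact Fdiag (j:ℕ) j.isLt
    · rw [if_neg hij]
      by_cases h1 : (i:ℕ) = 1 ∧ (j:ℕ) = 0
      · obtain rfl : i = ⟨1, hb1⟩ := fval i 1 hb1 h1.1
        obtain rfl : j = ⟨0, hb0⟩ := fval j 0 hb0 h1.2
        rw [if_pos h1]
      · rw [if_neg h1]
        by_cases h2 : (i:ℕ) = d-3 ∧ (j:ℕ) = d-2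
        · obtain rfl : i = ⟨d-3, hb2⟩ := fval i (d-3) hb2 h2.1
          obtain rfl : j = ⟨d-3+1, hb3⟩ := fval j (d-3+1) hb3 (by omega)
          rw [if_pos h2]
        · rw [if_neg h2]
          by_cases h3 : (i:ℕ) = d-3 ∧ (j:ℕ) = d-1
          · obtain rfl : i = ⟨d-3, hb2⟩ := fval i (d-3) hb2 h3.1
            obtain rfl : j = ⟨d-1, hb4⟩ := fval j (d-1) hb4 h3.2
            rw [if_pos h3]
          · rw [if_neg h3]
            exact Fvan i j hij h1 h2 h3
  · ext i j
    rw [entMat_apply]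
    by_cases hij : (i:ℕ) = (j:ℕ)
    · obtain rfl : i = ⟨(j:ℕ), j.isLt⟩ := fval i (j:ℕ) j.isLt hij
      rw [if_pos hij]
      exact Gdiag (j:ℕ) j.isLt
    · rw [if_neg hij]
      by_cases h1 : (i:ℕ) = 1 ∧ (j:ℕ) = 0
      · obtain rfl : i = ⟨1, hb1⟩ := fval i 1 hb1 h1.1
        obtain rfl : j = ⟨0, hb0⟩ := fval j 0 hb0 h1.2
        rw [if_pos h1]
        exact O1
      · rw [if_neg h1]
        by_cases h2 : (i:ℕ) = d-3 ∧ (j:ℕ) = d-2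
        · obtain rfl : i = ⟨d-3, hb2⟩ := fval i (d-3) hb2 h2.1
          obtain rfl : j = ⟨d-3+1, hb3⟩ := fval j (d-3+1) hb3 (by omega)
          rw [if_pos h2]
          exact O2
        · rw [if_neg h2]
          by_cases h3 : (i:ℕ) = d-3 ∧ (j:ℕ) = d-1
          · obtain rfl : i = ⟨d-3, hb2⟩ := fval i (d-3) hb2 h3.1
            obtain rfl : j = ⟨d-1, hb4⟩ := fval j (d-1) hb4 h3.2
            rw [if_pos h3]
            exact O3
          · rw [if_neg h3]
            exact Gvan i j hij h1 h2 h3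

lemma mem_adjD_iff (p d : ℕ)
    (fg : Matrix (Fin d) (Fin d) (ZMod p) × (Matrix (Fin d) (Fin d) (ZMod p))ᵐᵒᵖ) :
    fg ∈ AdjDRing p d ↔ ∀ u v : Fin d → ZMod p,
      BDform p d (u ᵥ* fg.1) v = BDform p d u (v ᵥ* fg.2.unop) := Iff.rfl

lemma smul_one_mem_adjD (p d : ℕ) (c : ZMod p) :
    ((c • (1 : Matrix (Fin d) (Fin d) (ZMod p)),
      op (c • (1 : Matrix (Fin d) (Fin d) (ZMod p))))
      : Matrix (Fin d) (Fin d) (ZMod p) × (Matrix (Fin d) (Fin d) (ZMod p))ᵐᵒᵖ)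
      ∈ AdjDRing p d := by
  rw [mem_adjD_iff]
  intro u v
  simp only [unop_op]
  have hvm : ∀ w : Fin d → ZMod p,
      w ᵥ* (c • (1 : Matrix (Fin d) (Fin d) (ZMod p))) = c • w := by
    intro w; ext j
    simp [Matrix.vecMul, dotProduct, Matrix.one_apply, mul_ite, mul_comm]
  rw [hvm, hvm]
  funext k
  by_cases hk : (k : ℕ) < d - 2 <;>
    simp only [BDform, hk, if_true, if_false, Pi.smul_apply, smul_eq_mul] <;> ring

lemma jac_forms (p d : ℕ) [Fact p.Prime] (hd : 4 ≤ d) (x : AdjDRing p d)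
    (hx : x ∈ Ideal.jacobson (⊥ : Ideal (AdjDRing p d))) :
    ∃ a b c : ZMod p,
      (x : Matrix (Fin d) (Fin d) (ZMod p) × (Matrix (Fin d) (Fin d) (ZMod p))ᵐᵒᵖ)
        = (entMat p d 0 0 a b c, op (entMat p d 0 0 (-a) (-b) (-c))) := by
  obtain ⟨α, β, a, b, c, hf, hg⟩ :=
    adj_struct p d hd x.val.1 x.val.2.unop ((mem_adjD_iff p d _).mp x.2)
  have key : ∀ t : ZMod p, t ≠ 0 →
      (∀ z : AdjDRing p d,
        z.val.1 * ((-t⁻¹) • (1 : Matrix (Fin d) (Fin d) (ZMod p)))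
            * x.val.1 + z.val.1 - 1 = 0 → False) → False := by
    intro t ht hcon
    obtain ⟨z, hz⟩ := Ideal.mem_jacobson_iff.mp hx
      ⟨((-t⁻¹) • 1, op ((-t⁻¹) • 1)), smul_one_mem_adjD p d _⟩
    rw [Ideal.mem_bot] at hz
    have hz1 := congrArg (fun w : AdjDRing p d => w.val.1) hz
    simp only [MulMemClass.coe_mul, AddMemClass.coe_add, Prod.fst_mul, Prod.fst_add,
      AddSubgroupClass.coe_sub, Prod.fst_sub, OneMemClass.coe_one, Prod.fst_one,
      ZeroMemClass.coe_zero, Prod.fst_zero] at hz1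
    exact hcon z hz1
  have hα : α = 0 := by
    by_contra hα0
    apply key α hα0
    intro z hz1
    obtain ⟨γ, δ, a', b', c', hzf, _⟩ :=
      adj_struct p d hd z.val.1 z.val.2.unop ((mem_adjD_iff p d _).mp z.2)
    rw [Matrix.mul_smul, Matrix.mul_one, Matrix.smul_mul, hzf, hf] at hz1
    have e : ((-α⁻¹) • (entMat p d γ δ a' b' c' * entMat p d α β a b c)
        + entMat p d γ δ a' b' c' - 1) (⟨0, by omega⟩ : Fin d) (⟨0, by omega⟩ : Fin d)
        = (0 : Matrix (Fin d) (Fin d) (ZMod p)) (⟨0, by omega⟩ : Fin d) (⟨0, by omega⟩ : Fin d) := by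
      rw [hz1]
    have emul : (entMat p d γ δ a' b' c' * entMat p d α β a b c)
        (⟨0, by omega⟩ : Fin d) (⟨0, by omega⟩ : Fin d) = γ * α := by
      rw [Matrix.mul_apply]
      rw [Finset.sum_eq_single (⟨0, by omega⟩ : Fin d)]
      · rw [ent_diag0 p d hd γ δ a' b' c' rfl rfl, ent_diag0 p d hd α β a b c rfl rfl]
      · intro k _ hk
        rw [ent_row0_out p d hd γ δ a' b' c' rfl
          (fun e0 => hk (Fin.val_injective e0)), zero_mul]
      · intro hnm; exact absurd (Finset.mem_univ _) hnm
    rw [Matrix.sub_apply, Matrix.add_apply, Matrix.smul_apply, emul, Matrix.one_apply_eq,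
      Matrix.zero_apply, ent_diag0 p d hd γ δ a' b' c' rfl rfl, smul_eq_mul] at e
    have e2 : (-1 : ZMod p) = 0 := by
      rw [← e]; field_simp; ring
    exact one_ne_zero (by linear_combination -e2)
  have hβ : β = 0 := by
    by_contra hβ0
    apply key β hβ0
    intro z hz1
    rw [Matrix.mul_smul, Matrix.mul_one, Matrix.smul_mul, hf] at hz1
    have e : ((-β⁻¹) • (z.val.1 * entMat p d α β a b c)
        + z.val.1 - 1) (⟨1, by omega⟩ : Fin d) (⟨1, by omega⟩ : Fin d)
        = (0 : Matrix (Fin d) (Fin d) (ZMod p)) (⟨1, by omega⟩ : Fin d) (⟨1, by omega⟩ : Fin d) := by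
      rw [hz1]
    have emul : (z.val.1 * entMat p d α β a b c)
        (⟨1, by omega⟩ : Fin d) (⟨1, by omega⟩ : Fin d)
        = z.val.1 (⟨1, by omega⟩ : Fin d) (⟨1, by omega⟩ : Fin d) * β := by
      rw [Matrix.mul_apply]
      rw [Finset.sum_eq_single (⟨1, by omega⟩ : Fin d)]
      · rw [ent_diag1 p d hd α β a b c rfl rfl]
      · intro k _ hk
        rw [ent_col1_out p d hd α β a b c rfl
          (fun e0 => hk (Fin.val_injective e0)), mul_zero]
      · intro hnm; exact absurd (Finset.mem_univ _) hnm
    rw [Matrix.sub_apply, Matrix.add_apply, Matrix.smul_apply, emul, Matrix.one_apply_eq,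
      Matrix.zero_apply, smul_eq_mul] at e
    have e2 : (-1 : ZMod p) = 0 := by
      rw [← e]; field_simp; ring
    exact one_ne_zero (by linear_combination -e2)
  subst hα; subst hβ
  refine ⟨a, b, c, ?_⟩
  have h2 : x.val.2 = op (entMat p d 0 0 (-a) (-b) (-c)) := by
    rw [← hg, op_unop]
  exact Prod.ext hf h2

/-- Let `p` be a prime, `d ≥ 4`, and let `B_D` be the type-`D`
bilinear map above.  The Jacobson radical `J` of the ring `Adj(B_D)` (the intersection of
its maximal left ideals, i.e. `Ideal.jacobson ⊥`) consists exactly of the pairs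
`(Q(x,y,z), −Q(x,y,z))` with `Q(x,y,z) = x·E_{21} + y·E_{d−2,d−1} + z·E_{d−2,d}`
(in `0`-based indexing `E 1 0`, `E (d−3) (d−2)`, `E (d−3) (d−1)`), and `J² = 0`. -/
theorem jacobson_adjoint_typeD (p d : ℕ) [Fact p.Prime] (hd : 4 ≤ d) :
    (∀ x : AdjDRing p d,
      x ∈ Ideal.jacobson (⊥ : Ideal (AdjDRing p d)) ↔
        ∃ a b c : ZMod p,
          (x : Matrix (Fin d) (Fin d) (ZMod p) × (Matrix (Fin d) (Fin d) (ZMod p))ᵐᵒᵖ) =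
            (a • Matrix.single ⟨1, by omega⟩ ⟨0, by omega⟩ 1
              + b • Matrix.single ⟨d - 3, by omega⟩ ⟨d - 2, by omega⟩ 1
              + c • Matrix.single ⟨d - 3, by omega⟩ ⟨d - 1, by omega⟩ 1,
             MulOpposite.op
              (-(a • Matrix.single ⟨1, by omega⟩ ⟨0, by omega⟩ 1
                + b • Matrix.single ⟨d - 3, by omega⟩ ⟨d - 2, by omega⟩ 1
                + c • Matrix.single ⟨d - 3, by omega⟩ ⟨d - 1, by omega⟩ 1)))) ∧
    (∀ x y : AdjDRing p d, x ∈ Ideal.jacobson (⊥ : Ideal (AdjDRing p d)) →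
      y ∈ Ideal.jacobson (⊥ : Ideal (AdjDRing p d)) → x * y = 0) := by
  have hent : ∀ a b c : ZMod p, entMat p d 0 0 a b c =
      a • Matrix.single (⟨1, by omega⟩ : Fin d) (⟨0, by omega⟩ : Fin d) 1
      + b • Matrix.single (⟨d-3, by omega⟩ : Fin d) (⟨d-2, by omega⟩ : Fin d) 1
      + c • Matrix.single (⟨d-3, by omega⟩ : Fin d) (⟨d-1, by omega⟩ : Fin d) 1 :=
    by
    intro a b c
    ext i j
    simp only [entMat_apply, Matrix.add_apply, Matrix.smul_apply, Matrix.single,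
      Matrix.of_apply, smul_eq_mul, mul_ite, mul_one, mul_zero, Fin.ext_iff, Fin.val_mk]
    split_ifs <;> first | (exfalso; omega) | simp
  constructor
  · intro x
    constructor
    · intro hx
      obtain ⟨a, b, c, hxv⟩ := jac_forms p d hd x hx
      refine ⟨a, b, c, ?_⟩
      rw [hxv, ent_zero_neg, hent a b c]
    · rintro ⟨a, b, c, hxv⟩
      have hx1 : x.val.1 = entMat p d 0 0 a b c := by
        rw [hxv, hent a b c]
      have hx2 : x.val.2 = op (entMat p d 0 0 (-a) (-b) (-c)) := by
        rw [hxv, ent_zero_neg, hent a b c]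
      have hxv2 : x.val = (entMat p d 0 0 a b c, op (entMat p d 0 0 (-a) (-b) (-c))) := by
        rw [← hx1, ← hx2]
      rw [Ideal.mem_jacobson_iff]
      intro y
      refine ⟨1 - y * x, ?_⟩
      rw [Ideal.mem_bot]
      obtain ⟨α, β, a', b', c', hyf, hyg⟩ :=
        adj_struct p d hd y.val.1 y.val.2.unop ((mem_adjD_iff p d _).mp y.2)
      have hy2 : y.val.2 = op (entMat p d β α (-a') (-b') (-c')) := by
        rw [← hyg, op_unop]
      have hyv2 : y.val = (entMat p d α β a' b' c', op (entMat p d β α (-a') (-b') (-c'))) := by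
        rw [← hyf, ← hy2]
      have hsq : (y * x) * (y * x) = 0 := by
        apply Subtype.ext
        simp only [MulMemClass.coe_mul, ZeroMemClass.coe_zero]
        rw [hyv2, hxv2, Prod.mk_mul_mk, Prod.mk_mul_mk]
        have c1 : entMat p d α β a' b' c' * entMat p d 0 0 a b c
            * (entMat p d α β a' b' c' * entMat p d 0 0 a b c) = 0 := by
          rw [mul_assoc, ← mul_assoc (entMat p d 0 0 a b c), QEQ p d hd, mul_zero]
        have c2 : (op (entMat p d β α (-a') (-b') (-c')) * op (entMat p d 0 0 (-a) (-b) (-c)))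
            * (op (entMat p d β α (-a') (-b') (-c')) * op (entMat p d 0 0 (-a) (-b) (-c)))
            = 0 := by
          rw [← op_mul, ← op_mul]
          rw [show entMat p d 0 0 (-a) (-b) (-c) * entMat p d β α (-a') (-b') (-c')
              * (entMat p d 0 0 (-a) (-b) (-c) * entMat p d β α (-a') (-b') (-c')) = 0 by
            rw [← mul_assoc, QEQ p d hd, zero_mul], op_zero]
        rw [c1, c2]
        rfl
      have hassoc : (1 - y * x) * y * x = (1 - y * x) * (y * x) := mul_assoc _ _ _
      rw [hassoc]
      have hrw : (1 - y * x) * (y * x) + (1 - y * x) - 1 = -((y * x) * (y * x)) := by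
        noncomm_ring
      rw [hrw, hsq, neg_zero]
  · intro x y hx hy
    obtain ⟨a, b, c, hxv⟩ := jac_forms p d hd x hx
    obtain ⟨a', b', c', hyv⟩ := jac_forms p d hd y hy
    apply Subtype.ext
    simp only [MulMemClass.coe_mul, ZeroMemClass.coe_zero]
    rw [hxv, hyv, Prod.mk_mul_mk, QQ_zero p d hd, ← op_mul, QQ_zero p d hd, op_zero]
    rfl
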